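/- Let Ω = (0,1), A_i = (0, 1/(i+1)), 𝒞 = {A_i}, P(A_i) = 1/(i+1) + δ, δ > 0, P(A_i) ≤ 1. There exists a betting portfolio (β_i, B_i)_{i≥1} with B_i ∈ 𝒞 that leads to uniform sure loss (constant negative balance) and whose truncated balances Σ_{i=n}^∞ β_i(I_{B_i} − P(B_i)) converge pointwise on Ω and are uniformly bounded over n ∈ ℕ on Ω, even though P is coherent in betting system 2B. -/

import Mathlib

open Filter MeasureTheory ENNReal

variable {Ω : Type*}

noncomputable def ind (A : Set Ω) (ω : Ω) : ℝ := A.indicator (fun _ => (1:ℝ)) ω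

def SeriesTendsTo (f : ℕ → ℝ) (x : ℝ) : Prop :=
  Tendsto (fun n => ∑ i ∈ Finset.range n, f i) atTop (nhds x)

def SeriesConv (f : ℕ → ℝ) : Prop := ∃ x, SeriesTendsTo f x

noncomputable def bterm (P : Set Ω → ℝ) (α : ℕ → ℝ) (A : ℕ → Set Ω) (ω : Ω) (i : ℕ) : ℝ :=
  α i * (ind (A i) ω - P (A i))

def IsSetField (C : Set (Set Ω)) : Prop :=
  Set.univ ∈ C ∧ (∀ A ∈ C, Aᶜ ∈ C) ∧ ∀ A ∈ C, ∀ B ∈ C, A ∪ B ∈ C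

def System1 (C : Set (Set Ω)) (α : ℕ → ℝ) (A : ℕ → Set Ω) : Prop :=
  (∀ i, A i ∈ C) ∧ {i | α i ≠ 0}.Finite

def System2 (C : Set (Set Ω)) (P : Set Ω → ℝ) (α : ℕ → ℝ) (A : ℕ → Set Ω) : Prop :=
  (∀ i, A i ∈ C) ∧ Summable (fun i => |α i| * P (A i)) ∧
    ∀ ω, SeriesConv (bterm P α A ω)

def System2A (C : Set (Set Ω)) (P : Set Ω → ℝ) (α : ℕ → ℝ) (A : ℕ → Set Ω) : Prop :=
  (∀ i, A i ∈ C) ∧ ∀ ω, Summable (fun i => |bterm P α A ω i|)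

def System2B (C : Set (Set Ω)) (P : Set Ω → ℝ) (α : ℕ → ℝ) (A : ℕ → Set Ω) : Prop :=
  (∀ i, A i ∈ C) ∧ ∃ M : ℝ, ∀ ω, ∀ n, ∑ i ∈ Finset.range n, |bterm P α A ω i| ≤ M

def System3 (C : Set (Set Ω)) (P : Set Ω → ℝ) (α : ℕ → ℝ) (A : ℕ → Set Ω) : Prop :=
  (∀ i, A i ∈ C) ∧ SeriesConv (fun i => α i * P (A i)) ∧
    ∀ ω, SeriesConv (bterm P α A ω)

def IncoherentIn (P : Set Ω → ℝ) (S : (ℕ → ℝ) → (ℕ → Set Ω) → Prop) : Prop :=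
  ∃ α A, S α A ∧ ∃ ε > (0:ℝ), ∀ ω, ∃ L, SeriesTendsTo (bterm P α A ω) L ∧ L ≤ -ε

def CoherentIn (P : Set Ω → ℝ) (S : (ℕ → ℝ) → (ℕ → Set Ω) → Prop) : Prop :=
  ¬ IncoherentIn P S

def IsNullSet (C : Set (Set Ω)) (P : Set Ω → ℝ) (Z : Set Ω) : Prop :=
  ∀ δ : ℝ, 0 < δ → ∃ Zd ∈ C, Z ⊆ Zd ∧ P Zd < δ

def WeaklyIncoherentIn (C : Set (Set Ω)) (P : Set Ω → ℝ)
    (S : (ℕ → ℝ) → (ℕ → Set Ω) → Prop) : Prop :=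
  ∃ α A, S α A ∧ ∃ ε > (0:ℝ), ∃ Z : Set Ω, IsNullSet C P Z ∧
    ∀ ω ∉ Z, ∃ L, SeriesTendsTo (bterm P α A ω) L ∧ L ≤ -ε

def StronglyCoherentIn (C : Set (Set Ω)) (P : Set Ω → ℝ)
    (S : (ℕ → ℝ) → (ℕ → Set Ω) → Prop) : Prop :=
  ¬ WeaklyIncoherentIn C P S

def IrrationalIn (P : Set Ω → ℝ) (S : (ℕ → ℝ) → (ℕ → Set Ω) → Prop) : Prop :=
  ∃ α A, S α A ∧ ∀ ω, ∃ L, SeriesTendsTo (bterm P α A ω) L ∧ L < 0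

def RationalIn (P : Set Ω → ℝ) (S : (ℕ → ℝ) → (ℕ → Set Ω) → Prop) : Prop :=
  ¬ IrrationalIn P S

def IsCAProb (C : Set (Set Ω)) (P : Set Ω → ℝ) : Prop :=
  P Set.univ = 1 ∧ (∀ A ∈ C, 0 ≤ P A) ∧
  (∀ A ∈ C, ∀ B ∈ C, Disjoint A B → P (A ∪ B) = P A + P B) ∧
  (∀ A : ℕ → Set Ω, (∀ i, A i ∈ C) → Pairwise (Function.onFun Disjoint A) →
    (⋃ i, A i) ∈ C → HasSum (fun i => P (A i)) (P (⋃ i, A i)))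

def IsPAtom (C : Set (Set Ω)) (P : Set Ω → ℝ) (F : Set Ω) : Prop :=
  F ∈ C ∧ 0 < P F ∧ ∀ B ∈ C, B ⊆ F → P B = P F ∨ P B = 0

def FiniteAtomicPartition (C : Set (Set Ω)) (P : Set Ω → ℝ) : Prop :=
  ∃ (n : ℕ) (F : Fin n → Set Ω), (∀ j, IsPAtom C P (F j)) ∧
    Pairwise (Function.onFun Disjoint F) ∧ (⋃ j, F j) = Set.univ

def IsPFinite (C : Set (Set Ω)) (P : Set Ω → ℝ) : Prop :=
  ∀ B : ℕ → Set Ω, (∀ i, B i ∈ C) → (∀ i, B (i+1) ⊆ B i) →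
    Tendsto (fun i => P (B i)) atTop (nhds 0) → ∃ j, P (B j) = 0

abbrev Ω01 : Type := Set.Ioo (0:ℝ) 1

def A01 (i : ℕ) : Set Ω01 := {ω | (ω : ℝ) < 1 / ((i : ℝ) + 1)}

namespace Stmt19Aux

def dpt (j : ℕ) : ℕ := Nat.log 2 (j+1)

noncomputable def xval (j : ℕ) : ℝ := (2:ℝ)⁻¹ ^ (dpt j)

lemma dpt_zero : dpt 0 = 0 := by simp [dpt]

lemma dpt_left (i : ℕ) : dpt (2*i+1) = dpt i + 1 := by
  show Nat.log 2 (2*i+1+1) = Nat.log 2 (i+1) + 1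
  have : 2*i+1+1 = (i+1)*2 := by ring
  rw [this, Nat.log_mul_base one_lt_two (by omega)]

lemma dpt_right (i : ℕ) : dpt (2*i+2) = dpt i + 1 := by
  show Nat.log 2 (2*i+2+1) = Nat.log 2 (i+1) + 1
  have h1 : 2 ^ Nat.log 2 (i+1) ≤ i+1 := Nat.pow_log_le_self 2 (by omega)
  have h2 : i+1 < 2 ^ (Nat.log 2 (i+1) + 1) := Nat.lt_pow_succ_log_self one_lt_two _
  exact Nat.log_eq_of_pow_le_of_lt_pow (by rw [pow_succ]; omega) (by rw [pow_succ, pow_succ]; omega)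

lemma le_dpt {K i : ℕ} (h : 2^K ≤ i+1) : K ≤ dpt i :=
  (Nat.le_log_iff_pow_le one_lt_two (by omega)).2 h

lemma dpt_mono {i j : ℕ} (h : i ≤ j) : dpt i ≤ dpt j := Nat.log_mono_right (by omega)

lemma xval_pos (j : ℕ) : 0 < xval j := by unfold xval; positivity

lemma xval_le_one (j : ℕ) : xval j ≤ 1 := by
  unfold xval; exact pow_le_one₀ (by norm_num) (by norm_num)

lemma xval_split (i : ℕ) : xval (2*i+1) + xval (2*i+2) = xval i := by
  unfold xval; rw [dpt_left, dpt_right, pow_succ]; ring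

lemma sum_Icc_step (f : ℕ → ℝ) (i : ℕ) :
    ∑ j ∈ Finset.Icc (i+1) (2*(i+1)), f j
      = ∑ j ∈ Finset.Icc i (2*i), f j + f (2*i+1) + f (2*i+2) - f i := by
  have h1 : ∑ j ∈ Finset.Icc i (2*i+1), f j = ∑ j ∈ Finset.Icc i (2*i), f j + f (2*i+1) :=
    Finset.sum_Icc_succ_top (by omega) f
  have h2 : ∑ j ∈ Finset.Icc i (2*i+2), f j = ∑ j ∈ Finset.Icc i (2*i+1), f j + f (2*i+2) := by
    have h : i ≤ 2*i+1+1 := by omega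
    have := Finset.sum_Icc_succ_top (a := i) (b := 2*i+1) h f
    convert this using 3 <;> omega
  have h3 : f i + ∑ j ∈ (Finset.Icc i (2*i+2)).erase i, f j = ∑ j ∈ Finset.Icc i (2*i+2), f j :=
    Finset.add_sum_erase _ f (by simp; omega)
  have h4 : (Finset.Icc i (2*i+2)).erase i = Finset.Icc (i+1) (2*(i+1)) := by
    rw [Finset.Icc_erase_left, ← Finset.Icc_add_one_left_eq_Ioc]
    have h : 2*(i+1) = 2*i+2 := by ring
    rw [h]
  rw [← h4]; rw [h2, h1] at h3; linarith

lemma sum_Icc_xval (i : ℕ) : ∑ j ∈ Finset.Icc i (2*i), xval j = 1 := by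
  induction i with
  | zero => simp [xval, dpt_zero]
  | succ n ih =>
    rw [sum_Icc_step, ih]
    have := xval_split n
    linarith

end Stmt19Aux

namespace Stmt19Aux

noncomputable def pval (δ : ℝ) (j : ℕ) : ℝ := 1/((dpt j : ℝ)+2) + δ

noncomputable def gam (δ : ℝ) (j : ℕ) : ℝ := xval j / pval δ j

noncomputable def beta (δ : ℝ) (n : ℕ) : ℝ :=
  if n = 0 then gam δ 0 else
  if (n-1) % 3 = 0 then gam δ (2*((n-1)/3)+1) else
  if (n-1) % 3 = 1 then gam δ (2*((n-1)/3)+2) else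
  - gam δ ((n-1)/3)

noncomputable def Bset (n : ℕ) : Set Ω01 :=
  if n = 0 then A01 (dpt 0 + 1) else
  if (n-1) % 3 = 0 then A01 (dpt (2*((n-1)/3)+1) + 1) else
  if (n-1) % 3 = 1 then A01 (dpt (2*((n-1)/3)+2) + 1) else
  A01 (dpt ((n-1)/3) + 1)

noncomputable def Fterm (δ : ℝ) (P : Set Ω01 → ℝ) (j : ℕ) (ω : Ω01) : ℝ :=
  gam δ j * (ind (A01 (dpt j + 1)) ω - pval δ j)

lemma ind_A01 (k : ℕ) (ω : Ω01) : ind (A01 k) ω = if (ω:ℝ) < 1/((k:ℝ)+1) then 1 else 0 := by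
  unfold ind A01
  rw [Set.indicator_apply]
  rfl

lemma ind_nonneg (k : ℕ) (ω : Ω01) : 0 ≤ ind (A01 k) ω := by
  rw [ind_A01]; split <;> norm_num

lemma ind_le_one (k : ℕ) (ω : Ω01) : ind (A01 k) ω ≤ 1 := by
  rw [ind_A01]; split <;> norm_num

end Stmt19Aux

set_option maxHeartbeats 2000000 in
open Stmt19Aux in
theorem part1 (δ : ℝ) (hδ : 0 < δ) (P : Set Ω01 → ℝ)
    (hP : ∀ i, 1 ≤ i → P (A01 i) = 1 / ((i : ℝ) + 1) + δ)
    (hle : ∀ i, 1 ≤ i → P (A01 i) ≤ 1) :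
    CoherentIn P (System2B {S | ∃ i, 1 ≤ i ∧ S = A01 i} P) := by
  rintro ⟨α, A, ⟨hAC, M₀, hM₀⟩, ε, hε, hloss⟩
  have hAC' : ∀ i, ∃ k, 1 ≤ k ∧ A i = A01 k := hAC
  choose j hj1 hjA using hAC'
  have hδhalf : δ ≤ 1/2 := by
    have h := hle 1 le_rfl
    rw [hP 1 le_rfl] at h
    norm_num at h
    linarith
  -- basic facts about q i = 1/(j i + 1)
  set q : ℕ → ℝ := fun i => 1/((j i:ℝ)+1) with hq
  have hq_pos : ∀ i, 0 < q i := fun i => by positivity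
  have hq_half : ∀ i, q i ≤ 1/2 := by
    intro i
    have h2 : (2:ℝ) ≤ (j i:ℝ)+1 := by
      have := hj1 i
      have : (1:ℝ) ≤ (j i:ℝ) := by exact_mod_cast this
      linarith
    rw [hq]
    simp only
    rw [div_le_div_iff₀ (by positivity) (by norm_num)]
    linarith
  have hind : ∀ i ω, ind (A i) ω = if (ω:ℝ) < q i then 1 else 0 := by
    intro i ω
    rw [hjA i]
    exact ind_A01 _ ω
  have hind_nonneg : ∀ i ω, 0 ≤ ind (A i) ω := by
    intro i ω; rw [hind]; split <;> norm_num
  have hind_le_one : ∀ i ω, ind (A i) ω ≤ 1 := by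
    intro i ω; rw [hind]; split <;> norm_num
  have hpq : ∀ i, P (A i) = q i + δ := fun i => by rw [hjA i]; exact hP (j i) (hj1 i)
  have hPpos : ∀ i, 0 < P (A i) := fun i => by rw [hpq]; have := hq_pos i; linarith
  have hPle1 : ∀ i, P (A i) ≤ 1 := fun i => by rw [hjA i]; exact hle (j i) (hj1 i)
  have hPge : ∀ i, δ ≤ P (A i) := fun i => by rw [hpq]; have := hq_pos i; linarith
  -- ω₀ = 3/4 : all indicators vanish there
  set ω₀ : Ω01 := ⟨3/4, by norm_num⟩ with hω₀
  have hind₀ : ∀ i, ind (A i) ω₀ = 0 := by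
    intro i
    rw [hind]
    apply if_neg
    push_neg
    have := hq_half i
    show q i ≤ (3:ℝ)/4
    linarith
  -- summability of |α|
  have habs : ∀ n, ∑ i ∈ Finset.range n, |α i| * P (A i) ≤ M₀ := by
    intro n
    have h := hM₀ ω₀ n
    have he : ∀ i ∈ Finset.range n, |bterm P α A ω₀ i| = |α i| * P (A i) := by
      intro i _
      simp only [bterm]
      rw [hind₀ i, zero_sub, mul_neg, abs_neg, abs_mul, abs_of_pos (hPpos i)]
    rw [Finset.sum_congr rfl he] at h
    exact h
  have hsum1 : Summable (fun i => |α i| * P (A i)) :=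
    summable_of_sum_range_le (fun i => mul_nonneg (abs_nonneg _) (hPpos i).le) habs
  have hsumabs : Summable (fun i => |α i|) := by
    apply Summable.of_nonneg_of_le (fun i => abs_nonneg _) ?_ (hsum1.mul_left δ⁻¹)
    intro i
    have h1 : 1 ≤ P (A i)/δ := (one_le_div hδ).mpr (hPge i)
    calc |α i| = |α i| * 1 := (mul_one _).symm
      _ ≤ |α i| * (P (A i)/δ) := mul_le_mul_of_nonneg_left h1 (abs_nonneg _)
      _ = δ⁻¹ * (|α i| * P (A i)) := by ring
  have hα : Summable α := hsumabs.of_abs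
  -- pointwise sums
  have hgsum : ∀ ω : Ω01, Summable (fun i => α i * ind (A i) ω) := by
    intro ω
    apply Summable.of_norm_bounded hsumabs
    intro i
    rw [Real.norm_eq_abs, abs_mul]
    calc |α i| * |ind (A i) ω| ≤ |α i| * 1 := by
          apply mul_le_mul_of_nonneg_left ?_ (abs_nonneg _)
          rw [abs_of_nonneg (hind_nonneg i ω)]
          exact hind_le_one i ω
      _ = |α i| := mul_one _
  have hpsum : Summable (fun i => α i * P (A i)) := by
    apply Summable.of_norm_bounded hsumabs
    intro i
    rw [Real.norm_eq_abs, abs_mul, abs_of_pos (hPpos i)]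
    calc |α i| * P (A i) ≤ |α i| * 1 := mul_le_mul_of_nonneg_left (hPle1 i) (abs_nonneg _)
      _ = |α i| := mul_one _
  set G : Ω01 → ℝ := fun ω => ∑' i, α i * ind (A i) ω with hG
  set S : ℝ := ∑' i, α i * P (A i) with hS
  set T : ℝ := ∑' i, α i with hT
  have hGtends : ∀ ω, SeriesTendsTo (bterm P α A ω) (G ω - S) := by
    intro ω
    have h := ((hgsum ω).hasSum.sub hpsum.hasSum).tendsto_sum_nat
    rw [SeriesTendsTo]
    apply h.congr
    intro n
    apply Finset.sum_congr rfl
    intro i _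
    simp only [bterm]
    ring
  have hkey : ∀ ω, G ω ≤ S - ε := by
    intro ω
    obtain ⟨L, hL, hLe⟩ := hloss ω
    have := tendsto_nhds_unique (hGtends ω) hL
    linarith
  have hSε : ε ≤ S := by
    have h := hkey ω₀
    have hG0 : G ω₀ = 0 := by
      rw [hG]
      simp only
      rw [tsum_congr (fun i => by rw [hind₀ i, mul_zero] : ∀ i, α i * ind (A i) ω₀ = 0)]
      exact tsum_zero
    rw [hG0] at h
    linarith
  -- T ≤ S - ε  via points tending to 0
  have hTle : T ≤ S - ε := by
    set w : ℕ → Ω01 := fun n => ⟨1/((n:ℝ)+3), by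
      constructor
      · positivity
      · rw [div_lt_one (by positivity)]
        have : (0:ℝ) ≤ (n:ℝ) := Nat.cast_nonneg n
        linarith⟩ with hw
    have hTconv : Tendsto (fun n => G (w n)) atTop (nhds T) := by
      apply tendsto_tsum_of_dominated_convergence hsumabs
      · intro i
        apply Tendsto.congr' ?_ (tendsto_const_nhds (x := α i))
        filter_upwards [eventually_ge_atTop (j i)] with n hn
        have hindw : ind (A i) (w n) = 1 := by
          rw [hind]
          apply if_pos
          show (1:ℝ)/((n:ℝ)+3) < q i
          rw [hq]
          simp only
          rw [div_lt_div_iff₀ (by positivity) (by positivity)]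
          have : (j i:ℝ) ≤ (n:ℝ) := by exact_mod_cast hn
          linarith
        rw [hindw, mul_one]
      · apply Filter.Eventually.of_forall
        intro n i
        rw [Real.norm_eq_abs, abs_mul]
        calc |α i| * |ind (A i) (w n)| ≤ |α i| * 1 := by
              apply mul_le_mul_of_nonneg_left ?_ (abs_nonneg _)
              rw [abs_of_nonneg (hind_nonneg i (w n))]
              exact hind_le_one i (w n)
          _ = |α i| := mul_one _
    exact le_of_tendsto hTconv (Filter.Eventually.of_forall fun n => hkey (w n))
  -- the band decomposition
  set u : ℕ → ℝ := fun m => 1/((m:ℝ)+2) with hu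
  set ℓ : ℕ → ℝ := fun m => u m - u (m+1) with hℓ
  have hu_pos : ∀ m, 0 < u m := fun m => by rw [hu]; positivity
  have hℓ_nonneg : ∀ m, 0 ≤ ℓ m := by
    intro m
    rw [hℓ, hu]
    simp only [sub_nonneg]
    rw [div_le_div_iff₀ (by positivity) (by positivity)]
    push_cast
    linarith
  have hu0 : Tendsto u atTop (nhds 0) := by
    rw [hu]
    have h2 : Tendsto (fun n:ℕ => ((n:ℝ)+2)) atTop atTop :=
      tendsto_atTop_add_const_right _ 2 tendsto_natCast_atTop_atTop
    exact h2.inv_tendsto_atTop.congr (fun n => (one_div _).symm)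
  have hband : ∀ K : ℕ, HasSum (fun m => ℓ (m+K)) (u K) := by
    intro K
    rw [hasSum_iff_tendsto_nat_of_nonneg (fun m => hℓ_nonneg _)]
    have hps : ∀ n, ∑ m ∈ Finset.range n, ℓ (m+K) = u K - u (n+K) := by
      intro n
      have h := Finset.sum_range_sub' (fun m => u (m+K)) n
      simp only [Nat.zero_add] at h
      rw [← h]
      apply Finset.sum_congr rfl
      intro m _
      simp only [hℓ]
      congr 2
      omega
    rw [show (fun n => ∑ m ∈ Finset.range n, ℓ (m+K)) = fun n => u K - u (n+K) from funext hps]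
    have h3 : Tendsto (fun n : ℕ => u (n+K)) atTop (nhds 0) :=
      hu0.comp (tendsto_add_atTop_nat K)
    have h4 := (tendsto_const_nhds (x := u K)).sub h3
    simpa using h4
  have hℓsum : Summable ℓ := by
    have h := (hband 0).summable
    apply h.congr
    intro m
    simp
  have hℓtot : HasSum ℓ (1/2) := by
    have h := hband 0
    simp only [Nat.add_zero] at h
    have hu0' : u 0 = 1/2 := by rw [hu]; norm_num
    rwa [hu0'] at h
  -- sample points in the bands
  set t : ℕ → Ω01 := fun m => ⟨2/(2*(m:ℝ)+5), by
    constructor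
    · positivity
    · rw [div_lt_one (by positivity)]
      have : (0:ℝ) ≤ (m:ℝ) := Nat.cast_nonneg m
      linarith⟩ with ht
  have hindt : ∀ i m, ind (A i) (t m) = if j i ≤ m+1 then (1:ℝ) else 0 := by
    intro i m
    have hiff : ((t m : ℝ) < q i) ↔ (j i ≤ m+1) := by
      have h1 : (0:ℝ) < 2*(m:ℝ)+5 := by positivity
      have h2 : (0:ℝ) < (j i:ℝ)+1 := by positivity
      rw [show ((t m : ℝ)) = 2/(2*(m:ℝ)+5) from rfl, hq]
      simp only
      rw [div_lt_div_iff₀ h1 h2]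
      rw [show (2*((j i:ℝ)+1)) = ((2*(j i)+2 : ℕ):ℝ) by push_cast; ring,
        show (1*(2*(m:ℝ)+5)) = ((2*m+5 : ℕ):ℝ) by push_cast; ring, Nat.cast_lt]
      omega
    rw [hind i (t m)]
    exact if_congr hiff rfl rfl
  -- for each i, the bands with index ≥ j i - 1 sum to q i
  have h_i_band : ∀ i, HasSum (fun m => if j i ≤ m+1 then ℓ m else 0) (q i) := by
    intro i
    set K : ℕ := j i - 1 with hK
    have hjK : j i = K + 1 := by have := hj1 i; omega
    have h1 : (fun n => (if j i ≤ n+K+1 then ℓ (n+K) else 0)) = fun n => ℓ (n+K) := by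
      funext n
      rw [if_pos (by omega)]
    have h2 : HasSum (fun n => if j i ≤ (n+K)+1 then ℓ (n+K) else 0) (u K) := by
      rw [show (fun n => if j i ≤ (n+K)+1 then ℓ (n+K) else 0)
        = fun n => ℓ (n+K) from h1]
      exact hband K
    have h3 := (hasSum_nat_add_iff (f := fun m => if j i ≤ m+1 then ℓ m else 0) K).mp h2
    have h4 : ∑ m ∈ Finset.range K, (if j i ≤ m+1 then ℓ m else 0) = 0 := by
      apply Finset.sum_eq_zero
      intro m hm
      rw [if_neg]
      rw [Finset.mem_range] at hm
      omega
    rw [h4, add_zero] at h3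
    have h5 : u K = q i := by
      rw [hu, hq]
      simp only
      congr 1
      rw [hjK]
      push_cast
      ring
    rwa [h5] at h3
  -- product summability and exchange of sums
  have hprod : Summable (Function.uncurry (fun m i => ℓ m * (α i * ind (A i) (t m)))) := by
    apply Summable.of_norm_bounded (g := fun x : ℕ × ℕ => ℓ x.1 * |α x.2|)
      (hℓsum.mul_of_nonneg hsumabs (Pi.le_def.mpr hℓ_nonneg) (Pi.le_def.mpr (fun i => abs_nonneg _)))
    rintro ⟨m, i⟩
    simp only [Function.uncurry, Real.norm_eq_abs, abs_mul]
    rw [abs_of_nonneg (hℓ_nonneg m), abs_of_nonneg (hind_nonneg i (t m))]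
    nlinarith [mul_nonneg (mul_nonneg (hℓ_nonneg m) (abs_nonneg (α i)))
      (by linarith [hind_le_one i (t m)] : (0:ℝ) ≤ 1 - ind (A i) (t m))]
  have hslice1 : ∀ m, Summable (fun i => ℓ m * (α i * ind (A i) (t m))) := fun m =>
    (hgsum (t m)).mul_left (ℓ m)
  have hslice2 : ∀ i, Summable (fun m => ℓ m * (α i * ind (A i) (t m))) := by
    intro i
    apply Summable.of_norm_bounded (g := fun m => ℓ m * |α i|) (hℓsum.mul_right _)
    intro m
    simp only [Real.norm_eq_abs, abs_mul]
    rw [abs_of_nonneg (hℓ_nonneg m), abs_of_nonneg (hind_nonneg i (t m))]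
    nlinarith [mul_nonneg (mul_nonneg (hℓ_nonneg m) (abs_nonneg (α i)))
      (by linarith [hind_le_one i (t m)] : (0:ℝ) ≤ 1 - ind (A i) (t m))]
  have hswap : ∑' m, ∑' i, ℓ m * (α i * ind (A i) (t m))
      = ∑' i, ∑' m, ℓ m * (α i * ind (A i) (t m)) :=
    (Summable.tsum_comm' hprod hslice1 hslice2).symm
  have hlhs : ∑' m, ∑' i, ℓ m * (α i * ind (A i) (t m)) = ∑' m, ℓ m * G (t m) := by
    apply tsum_congr
    intro m
    rw [hG]
    rw [tsum_mul_left]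
  have hrhs : ∑' i, ∑' m, ℓ m * (α i * ind (A i) (t m)) = ∑' i, α i * q i := by
    apply tsum_congr
    intro i
    have he : ∀ m, ℓ m * (α i * ind (A i) (t m)) = α i * (if j i ≤ m+1 then ℓ m else 0) := by
      intro m
      rw [hindt i m]
      split_ifs <;> ring
    rw [tsum_congr he, tsum_mul_left, (h_i_band i).tsum_eq]
  -- summability of the weighted G series
  set C : ℝ := ∑' i, |α i| with hC
  have hGbound : ∀ ω, |G ω| ≤ C := by
    intro ω
    rw [hG, hC]
    simp only
    have h1 : Summable (fun i => |α i * ind (A i) ω|) := by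
      apply Summable.of_nonneg_of_le (fun i => abs_nonneg _) ?_ hsumabs
      intro i
      rw [abs_mul]
      have := hind_le_one i ω
      have := hind_nonneg i ω
      have := abs_nonneg (α i)
      rw [abs_of_nonneg (hind_nonneg i ω)]
      nlinarith
    calc |∑' i, α i * ind (A i) ω| ≤ ∑' i, |α i * ind (A i) ω| := by
          have := norm_tsum_le_tsum_norm (f := fun i => α i * ind (A i) ω)
            (by simp only [Real.norm_eq_abs]; exact h1)
          simp only [Real.norm_eq_abs] at this
          exact this
      _ ≤ ∑' i, |α i| := by
          apply Summable.tsum_le_tsum ?_ h1 hsumabs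
          intro i
          rw [abs_mul, abs_of_nonneg (hind_nonneg i ω)]
          have := hind_le_one i ω
          have := hind_nonneg i ω
          have := abs_nonneg (α i)
          nlinarith
  have hsum_lG : Summable (fun m => ℓ m * G (t m)) := by
    apply Summable.of_norm_bounded (g := fun m => ℓ m * C) (hℓsum.mul_right C)
    intro m
    rw [Real.norm_eq_abs, abs_mul, abs_of_nonneg (hℓ_nonneg m)]
    exact mul_le_mul_of_nonneg_left (hGbound (t m)) (hℓ_nonneg m)
  -- decomposition of S
  have hsum_qα : Summable (fun i => α i * q i) := by
    apply Summable.of_norm_bounded hsumabs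
    intro i
    rw [Real.norm_eq_abs, abs_mul, abs_of_pos (hq_pos i)]
    have := hq_half i
    have := hq_pos i
    have := abs_nonneg (α i)
    nlinarith
  have hSdecomp : S = (∑' i, α i * q i) + δ * T := by
    rw [hS, hT]
    rw [tsum_congr (fun i => by rw [hpq i]; ring :
      ∀ i, α i * P (A i) = α i * q i + δ * α i)]
    rw [Summable.tsum_add hsum_qα (hα.mul_left δ), tsum_mul_left]
  -- final contradiction
  have h1 : ∑' m, ℓ m * G (t m) ≤ ∑' m, ℓ m * (S - ε) := by
    apply Summable.tsum_le_tsum ?_ hsum_lG (hℓsum.mul_right _)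
    intro m
    exact mul_le_mul_of_nonneg_left (hkey (t m)) (hℓ_nonneg m)
  have h2 : ∑' m, ℓ m * (S - ε) = (1/2) * (S - ε) := by
    rw [tsum_mul_right, hℓtot.tsum_eq]
  have h3 : S = (∑' m, ℓ m * G (t m)) + δ * T := by
    rw [hSdecomp, ← hrhs, ← hswap, hlhs]
  have h4 : δ * T ≤ δ * (S - ε) := mul_le_mul_of_nonneg_left hTle hδ.le
  nlinarith [mul_nonneg (by linarith : (0:ℝ) ≤ 1/2 - δ) (by linarith : (0:ℝ) ≤ S - ε)]


open Stmt19Aux in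
theorem part2 (δ : ℝ) (hδ : 0 < δ) (P : Set Ω01 → ℝ)
    (hP : ∀ i, 1 ≤ i → P (A01 i) = 1 / ((i : ℝ) + 1) + δ)
    (hle : ∀ i, 1 ≤ i → P (A01 i) ≤ 1) :
    ∃ (β : ℕ → ℝ) (B : ℕ → Set Ω01), (∀ i, ∃ j, 1 ≤ j ∧ B i = A01 j) ∧
      (∃ c : ℝ, c < 0 ∧ ∀ ω, SeriesTendsTo (bterm P β B ω) c) ∧
      (∀ n : ℕ, ∀ ω, SeriesConv (fun i => bterm P β B ω (n + i))) ∧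
      (∃ M : ℝ, ∀ n : ℕ, ∀ ω L, SeriesTendsTo (fun i => bterm P β B ω (n + i)) L → |L| ≤ M) := by
  have hPA : ∀ j : ℕ, P (A01 (dpt j + 1)) = pval δ j := by
    intro j
    rw [hP (dpt j + 1) (by omega)]
    unfold pval
    push_cast
    ring
  have hpval_pos : ∀ j, 0 < pval δ j := fun j => by unfold pval; positivity
  have hpval_ge : ∀ j, δ ≤ pval δ j := fun j => by
    unfold pval
    have : 0 < 1/((dpt j:ℝ)+2) := by positivity
    linarith
  have hpval_le : ∀ j, pval δ j ≤ 1 := fun j => by rw [← hPA j]; exact hle _ (by omega)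
  have hgam_nonneg : ∀ j, 0 ≤ gam δ j := fun j => div_nonneg (xval_pos j).le (hpval_pos j).le
  have hgam_le : ∀ j, gam δ j ≤ xval j / δ := by
    intro j
    unfold gam
    gcongr
    · exact (xval_pos j).le
    · exact hpval_ge j
  -- bterm evaluation
  have hb0 : ∀ ω, bterm P (beta δ) Bset ω 0 = Fterm δ P 0 ω := by
    intro ω
    simp only [bterm, beta, Bset, Fterm, eq_self_iff_true, if_true]
    rw [hPA]
  have hb1 : ∀ i ω, bterm P (beta δ) Bset ω (3*i+1) = Fterm δ P (2*i+1) ω := by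
    intro i ω
    have h0 : ¬(3*i+1 = 0) := by omega
    have h1 : (3*i+1-1) % 3 = 0 := by omega
    have h2 : (3*i+1-1) / 3 = i := by omega
    simp only [bterm, beta, Bset, Fterm, if_neg h0, h1, h2, eq_self_iff_true, if_true]
    rw [hPA]
  have hb2 : ∀ i ω, bterm P (beta δ) Bset ω (3*i+2) = Fterm δ P (2*i+2) ω := by
    intro i ω
    have h0 : ¬(3*i+2 = 0) := by omega
    have h1 : (3*i+2-1) % 3 = 1 := by omega
    have h2 : (3*i+2-1) / 3 = i := by omega
    simp only [bterm, beta, Bset, Fterm, if_neg h0, h1, h2,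
      if_neg (show ¬(1:ℕ) = 0 from by norm_num), if_pos (rfl : (1:ℕ) = 1), eq_self_iff_true, if_true]
    rw [hPA]
  have hb3 : ∀ i ω, bterm P (beta δ) Bset ω (3*i+3) = -Fterm δ P i ω := by
    intro i ω
    have h0 : ¬(3*i+3 = 0) := by omega
    have h1 : (3*i+3-1) % 3 = 2 := by omega
    have h2 : (3*i+3-1) / 3 = i := by omega
    simp only [bterm, beta, Bset, Fterm, if_neg h0, h1, h2,
      if_neg (show ¬(2:ℕ) = 0 from by norm_num), if_neg (show ¬(2:ℕ) = 1 from by norm_num)]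
    rw [hPA]
    ring
  -- partial sums at block boundaries
  have key : ∀ (ω : Ω01) (i : ℕ), ∑ m ∈ Finset.range (3*i+1), bterm P (beta δ) Bset ω m
      = ∑ j ∈ Finset.Icc i (2*i), Fterm δ P j ω := by
    intro ω i
    induction i with
    | zero => simpa using hb0 ω
    | succ n ih =>
      have e : 3*(n+1)+1 = ((3*n+1)+1)+1+1 := by ring
      rw [e, Finset.sum_range_succ, Finset.sum_range_succ, Finset.sum_range_succ, ih]
      have e1 : (3*n+1)+1 = 3*n+2 := by ring
      have e2 : ((3*n+1)+1)+1 = 3*n+3 := by ring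
      rw [e1, e2, hb1 n ω, hb2 n ω, hb3 n ω, sum_Icc_step (fun j => Fterm δ P j ω) n]
      ring
  have hFabs : ∀ j ω, |Fterm δ P j ω| ≤ xval j / δ := by
    intro j ω
    have h1 : |ind (A01 (dpt j + 1)) ω - pval δ j| ≤ 1 := by
      have i1 := ind_nonneg (dpt j + 1) ω
      have i2 := ind_le_one (dpt j + 1) ω
      have p1 := hpval_pos j
      have p2 := hpval_le j
      rw [abs_le]; constructor <;> linarith
    unfold Fterm
    rw [abs_mul, abs_of_nonneg (hgam_nonneg j)]
    calc gam δ j * |ind (A01 (dpt j + 1)) ω - pval δ j| ≤ gam δ j * 1 := by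
          exact mul_le_mul_of_nonneg_left h1 (hgam_nonneg j)
      _ = gam δ j := mul_one _
      _ ≤ xval j / δ := hgam_le j
  have hsum_bound : ∀ (ω : Ω01) (i : ℕ), |∑ j ∈ Finset.Icc i (2*i), Fterm δ P j ω| ≤ 1/δ := by
    intro ω i
    calc |∑ j ∈ Finset.Icc i (2*i), Fterm δ P j ω|
        ≤ ∑ j ∈ Finset.Icc i (2*i), |Fterm δ P j ω| := Finset.abs_sum_le_sum_abs _ _
      _ ≤ ∑ j ∈ Finset.Icc i (2*i), xval j / δ := Finset.sum_le_sum (fun j _ => hFabs j ω)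
      _ = (∑ j ∈ Finset.Icc i (2*i), xval j) / δ := by rw [Finset.sum_div]
      _ = 1/δ := by rw [sum_Icc_xval]
  -- uniform bound on all partial sums
  have hPSbound : ∀ (ω : Ω01) (n : ℕ), |∑ m ∈ Finset.range n, bterm P (beta δ) Bset ω m| ≤ 2/δ := by
    intro ω n
    have hδ' : (0:ℝ) < 1/δ := by positivity
    have hrep : n = 0 ∨ n = 3*((n-1)/3)+1 ∨ n = 3*((n-1)/3)+2 ∨ n = 3*((n-1)/3)+3 := by omega
    set i := (n-1)/3 with hi
    have hx1 : xval (2*i+1) ≤ xval i := by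
      have h1 := xval_split i
      have h2 := xval_pos (2*i+2)
      linarith
    have hxi1 : xval i ≤ 1 := xval_le_one i
    have hF1 : |Fterm δ P (2*i+1) ω| ≤ 1/δ := by
      calc |Fterm δ P (2*i+1) ω| ≤ xval (2*i+1) / δ := hFabs _ ω
        _ ≤ 1/δ := by gcongr; linarith
    have hF12 : |Fterm δ P (2*i+1) ω| + |Fterm δ P (2*i+2) ω| ≤ 1/δ := by
      have a1 := hFabs (2*i+1) ω
      have a2 := hFabs (2*i+2) ω
      have h1 := xval_split i
      have : xval (2*i+1) / δ + xval (2*i+2) / δ = xval i / δ := by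
        rw [← add_div, h1]
      have : xval i / δ ≤ 1/δ := by gcongr
      linarith
    have h2δ : 1/δ + 1/δ = 2/δ := by ring
    rcases hrep with h | h | h | h
    · rw [h]
      simp
      positivity
    · rw [h, key ω i]
      have := hsum_bound ω i
      linarith
    · rw [h, show 3*i+2 = (3*i+1)+1 from rfl, Finset.sum_range_succ, key ω i, hb1 i ω]
      have h1 := hsum_bound ω i
      have h2 := abs_add_le (∑ j ∈ Finset.Icc i (2*i), Fterm δ P j ω) (Fterm δ P (2*i+1) ω)
      have h3 : (0:ℝ) ≤ |Fterm δ P (2*i+2) ω| := abs_nonneg _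
      linarith
    · rw [h, show 3*i+3 = ((3*i+1)+1)+1 from rfl, Finset.sum_range_succ, Finset.sum_range_succ,
        key ω i, hb1 i ω, show (3*i+1)+1 = 3*i+2 from rfl, hb2 i ω]
      have h1 := hsum_bound ω i
      have h2 := abs_add_le (∑ j ∈ Finset.Icc i (2*i), Fterm δ P j ω + Fterm δ P (2*i+1) ω)
        (Fterm δ P (2*i+2) ω)
      have h3 := abs_add_le (∑ j ∈ Finset.Icc i (2*i), Fterm δ P j ω) (Fterm δ P (2*i+1) ω)
      linarith
  -- the main convergence
  have hmain : ∀ ω : Ω01, SeriesTendsTo (bterm P (beta δ) Bset ω) (-1) := by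
    intro ω
    have hω : 0 < (ω:ℝ) := ω.2.1
    obtain ⟨K₁, hK₁⟩ := exists_nat_ge (1/(ω:ℝ))
    have hind0 : ∀ j, K₁ ≤ dpt j → ind (A01 (dpt j + 1)) ω = 0 := by
      intro j hj
      rw [ind_A01, if_neg]
      push_neg
      have hc : (K₁:ℝ) ≤ (dpt j : ℝ) := by exact_mod_cast hj
      have hpos : (0:ℝ) < ((dpt j + 1 : ℕ):ℝ) + 1 := by positivity
      rw [div_le_iff₀ hpos]
      rw [div_le_iff₀ hω] at hK₁
      have : ((dpt j + 1 : ℕ):ℝ) + 1 ≥ (K₁:ℝ) := by push_cast; linarith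
      nlinarith
    have hFz : ∀ j, K₁ ≤ dpt j → Fterm δ P j ω = -xval j := by
      intro j hj
      unfold Fterm
      rw [hind0 j hj, zero_sub, mul_neg, neg_inj]
      unfold gam
      exact div_mul_cancel₀ _ (hpval_pos j).ne'
    rw [SeriesTendsTo, Metric.tendsto_atTop]
    intro ε hε
    obtain ⟨K₂, hK₂⟩ := exists_pow_lt_of_lt_one hε (by norm_num : (2:ℝ)⁻¹ < 1)
    set K := max K₁ K₂ with hK
    refine ⟨3*2^K + 1, ?_⟩
    intro n hn
    have hn1 : 1 ≤ n := by omega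
    have hrep : n = 3*((n-1)/3)+1 ∨ n = 3*((n-1)/3)+2 ∨ n = 3*((n-1)/3)+3 := by omega
    set i := (n-1)/3 with hi
    have hiK : 2^K ≤ i + 1 := by omega
    have hdK : K ≤ dpt i := le_dpt hiK
    have hd1 : K₁ ≤ dpt i := le_trans (le_max_left _ _) hdK
    have hzero : ∀ j ∈ Finset.Icc i (2*i), Fterm δ P j ω = -xval j := fun j hj =>
      hFz j (le_trans hd1 (dpt_mono (Finset.mem_Icc.mp hj).1))
    have hsumF : ∑ j ∈ Finset.Icc i (2*i), Fterm δ P j ω = -1 := by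
      rw [Finset.sum_congr rfl hzero, Finset.sum_neg_distrib, sum_Icc_xval]
    have hxiK : xval i ≤ (2:ℝ)⁻¹ ^ K₂ := by
      unfold xval
      exact pow_le_pow_of_le_one (by norm_num) (by norm_num)
        (le_trans (le_max_right _ _) hdK)
    have hxiε : xval i < ε := lt_of_le_of_lt hxiK hK₂
    have hd21 : K₁ ≤ dpt (2*i+1) := by rw [dpt_left]; omega
    have hd22 : K₁ ≤ dpt (2*i+2) := by rw [dpt_right]; omega
    have hxsplit := xval_split i
    have hxp1 := xval_pos (2*i+1)
    have hxp2 := xval_pos (2*i+2)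
    rw [Real.dist_eq]
    rcases hrep with h | h | h
    · rw [h, key ω i, hsumF]
      simpa using hε
    · rw [h, show 3*i+2 = (3*i+1)+1 from rfl, Finset.sum_range_succ, key ω i, hb1 i ω,
        hsumF, hFz _ hd21]
      rw [show (-1 + -xval (2*i+1) - -1 : ℝ) = -(xval (2*i+1)) by ring, abs_neg,
        abs_of_pos hxp1]
      linarith
    · rw [h, show 3*i+3 = ((3*i+1)+1)+1 from rfl, Finset.sum_range_succ, Finset.sum_range_succ,
        key ω i, hb1 i ω, show (3*i+1)+1 = 3*i+2 from rfl, hb2 i ω,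
        hsumF, hFz _ hd21, hFz _ hd22]
      rw [show (-1 + -xval (2*i+1) + -xval (2*i+2) - -1 : ℝ) = -(xval (2*i+1) + xval (2*i+2)) by
        ring, abs_neg, abs_of_pos (by linarith)]
      linarith
  -- the tail convergence
  have htail : ∀ (n : ℕ) (ω : Ω01), SeriesTendsTo (fun i => bterm P (beta δ) Bset ω (n + i))
      (-1 - ∑ m ∈ Finset.range n, bterm P (beta δ) Bset ω m) := by
    intro n ω
    have h1 : ∀ m : ℕ, ∑ i ∈ Finset.range m, bterm P (beta δ) Bset ω (n + i)
        = ∑ i ∈ Finset.range (n + m), bterm P (beta δ) Bset ω i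
          - ∑ i ∈ Finset.range n, bterm P (beta δ) Bset ω i := by
      intro m
      rw [Finset.sum_range_add]
      ring
    rw [SeriesTendsTo]
    apply Tendsto.congr (fun m => (h1 m).symm)
    have h2 : Tendsto (fun m => ∑ i ∈ Finset.range (n + m), bterm P (beta δ) Bset ω i)
        atTop (nhds (-1)) := by
      have h3 : Tendsto (fun m : ℕ => n + m) atTop atTop := tendsto_add_atTop_nat n |>.congr
        (fun m => by ring)
      exact (hmain ω).comp h3
    have h4 := h2.sub_const (∑ i ∈ Finset.range n, bterm P (beta δ) Bset ω i)
    have h5 : (-1:ℝ) - ∑ i ∈ Finset.range n, bterm P (beta δ) Bset ω i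
        = -1 - ∑ m ∈ Finset.range n, bterm P (beta δ) Bset ω m := rfl
    rw [h5] at h4
    exact h4
  refine ⟨beta δ, Bset, ?_, ⟨-1, by norm_num, hmain⟩, fun n ω => ⟨_, htail n ω⟩, ⟨1 + 2/δ, ?_⟩⟩
  · intro n
    unfold Bset
    split_ifs
    exacts [⟨dpt 0 + 1, by omega, rfl⟩, ⟨_, by omega, rfl⟩, ⟨_, by omega, rfl⟩, ⟨_, by omega, rfl⟩]
  · intro n ω L hL
    have hLeq : L = -1 - ∑ m ∈ Finset.range n, bterm P (beta δ) Bset ω m :=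
      tendsto_nhds_unique hL (htail n ω)
    have := hPSbound ω n
    rw [hLeq]
    calc |(-1 : ℝ) - ∑ m ∈ Finset.range n, bterm P (beta δ) Bset ω m|
        ≤ |(-1:ℝ)| + |∑ m ∈ Finset.range n, bterm P (beta δ) Bset ω m| := abs_sub _ _
      _ ≤ 1 + 2/δ := by rw [abs_neg, abs_one]; linarith

theorem stmt19 (δ : ℝ) (hδ : 0 < δ) (P : Set Ω01 → ℝ)
    (hP : ∀ i, 1 ≤ i → P (A01 i) = 1 / ((i : ℝ) + 1) + δ)
    (hle : ∀ i, 1 ≤ i → P (A01 i) ≤ 1) :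
    CoherentIn P (System2B {S | ∃ i, 1 ≤ i ∧ S = A01 i} P) ∧
    ∃ (β : ℕ → ℝ) (B : ℕ → Set Ω01), (∀ i, ∃ j, 1 ≤ j ∧ B i = A01 j) ∧
      (∃ c : ℝ, c < 0 ∧ ∀ ω, SeriesTendsTo (bterm P β B ω) c) ∧
      (∀ n : ℕ, ∀ ω, SeriesConv (fun i => bterm P β B ω (n + i))) ∧
      (∃ M : ℝ, ∀ n : ℕ, ∀ ω L, SeriesTendsTo (fun i => bterm P β B ω (n + i)) L → |L| ≤ M) :=
  ⟨part1 δ hδ P hP hle, part2 δ hδ P hP hle⟩
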